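/- Let α > 0, γ ∈ ℝ with γ ≠ 1, and let H, S be diagonal d×d real matrices with diagonal entries h_i ≠ 0 and s_i ≥ 0 such that (1 − γ)(1 + γ − α h_i/2) ≠ 0 for all i. For each i, let S_i = [[s_{θ,i}, s_{vθ,i}], [s_{vθ,i}, s_{v,i}]] be a symmetric fixed point of S_i = P_i S_i P_iᵀ + [[0,0],[0,s_i]], where P_i = [[1, −α], [h_i, γ − α h_i]]. Then the stationary expected suboptimality satisfies (1/2)·Σ_{i=1}^d h_i · s_{θ,i} = (α/2)·((1 + γ)/(1 − γ))·Tr((2(1 + γ) I − α H)^{−1} S). -/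

import Mathlib

open Matrix

/-- (Proposition 5 of the paper, limit cycle of momentum.) With `H` and
`S` simultaneously diagonal (entries `h_i ≠ 0`, `s_i ≥ 0`), `α > 0`, `γ ≠ 1` and
`(1 − γ)(1 + γ − αh_i/2) ≠ 0`, if for each coordinate `i` the symmetric matrix
`S_i = [[s_{θ,i}, s_{vθ,i}], [s_{vθ,i}, s_{v,i}]]` is a fixed point of
`S_i = P_i S_i P_iᵀ + [[0,0],[0,s_i]]` with `P_i = [[1, −α], [h_i, γ − αh_i]]`, then the
stationary expected suboptimality satisfies
`(1/2)·∑ i, h_i s_{θ,i} = (α/2)·((1+γ)/(1−γ))·Tr((2(1+γ)I − αH)⁻¹ S)`. -/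
theorem polyak_momentum_limit_cycle
    (d : ℕ) (α γ : ℝ) (hα : 0 < α) (hγ : γ ≠ 1)
    (h s : Fin d → ℝ) (hh : ∀ i, h i ≠ 0) (hs : ∀ i, 0 ≤ s i)
    (hden : ∀ i, (1 - γ) * (1 + γ - α * h i / 2) ≠ 0)
    (sθ svθ sv : Fin d → ℝ)
    (hfix : ∀ i, !![sθ i, svθ i; svθ i, sv i]
      = !![1, -α; h i, γ - α * h i] * !![sθ i, svθ i; svθ i, sv i]
          * (!![1, -α; h i, γ - α * h i])ᵀ
        + !![0, 0; 0, s i]) :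
    1 / 2 * ∑ i, h i * sθ i
      = α / 2 * ((1 + γ) / (1 - γ))
          * (((2 * (1 + γ)) • (1 : Matrix (Fin d) (Fin d) ℝ) - α • Matrix.diagonal h)⁻¹
              * Matrix.diagonal s).trace := by
  have hM : (2 * (1 + γ)) • (1 : Matrix (Fin d) (Fin d) ℝ) - α • Matrix.diagonal h
      = Matrix.diagonal (fun i => 2 * (1 + γ) - α * h i) := by
    rw [smul_one_eq_diagonal, ← diagonal_smul, ← diagonal_sub]
    rfl
  have hnz : ∀ i, 2 * (1 + γ) - α * h i ≠ 0 := by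
    intro i hc
    apply hden i
    have : 1 + γ - α * h i / 2 = 0 := by linarith
    rw [this, mul_zero]
  have hinv : (Matrix.diagonal (fun i => 2 * (1 + γ) - α * h i))⁻¹
      = Matrix.diagonal (fun i => (2 * (1 + γ) - α * h i)⁻¹) := by
    apply Matrix.inv_eq_right_inv
    rw [Matrix.diagonal_mul_diagonal]
    rw [show (fun i => (2 * (1 + γ) - α * h i) * (2 * (1 + γ) - α * h i)⁻¹)
        = fun _ => (1:ℝ) from funext fun i => mul_inv_cancel₀ (hnz i), Matrix.diagonal_one]
  rw [hM, hinv, Matrix.diagonal_mul_diagonal, Matrix.trace_diagonal]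
  rw [Finset.mul_sum, Finset.mul_sum]
  refine Finset.sum_congr rfl fun i _ => ?_
  -- per-coordinate algebra
  have h1γ : (1 : ℝ) - γ ≠ 0 := sub_ne_zero.mpr (Ne.symm hγ)
  have h2 : 1 + γ - α * h i / 2 ≠ 0 := by
    intro hc; exact hden i (by rw [hc, mul_zero])
  have h3 : 2 * (1 + γ) - α * h i ≠ 0 := by
    intro hc; apply h2; linarith
  have ht : (!![1, -α; h i, γ - α * h i])ᵀ = !![1, h i; -α, γ - α * h i] := by
    ext a b; fin_cases a <;> fin_cases b <;> rfl
  have hf := hfix i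
  rw [ht, Matrix.mul_fin_two, Matrix.mul_fin_two] at hf
  have e00 := congrFun (congrFun hf 0) 0
  have e01 := congrFun (congrFun hf 0) 1
  have e11 := congrFun (congrFun hf 1) 1
  simp at e00 e01 e11
  have r1 : 2 * svθ i = α * sv i :=
    mul_left_cancel₀ hα.ne' (by linear_combination e00)
  have r2 : 2 * (h i * sθ i) = α * (1 + γ) * sv i := by
    linear_combination (-2) * e01 + (1 - γ + 2 * α * h i) * r1
  have r3 : sv i * ((1 - γ) * (1 + γ - α * h i / 2)) = s i := by
    linear_combination e11 + h i * (γ - α * h i) * r1 + (h i / 2) * r2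
  show 1 / 2 * (h i * sθ i) = α / 2 * ((1 + γ) / (1 - γ)) * ((2 * (1 + γ) - α * h i)⁻¹ * s i)
  linear_combination (1 / 4 : ℝ) * r2 + (α * (1 + γ) / 2 * (1 - γ)⁻¹ * (2 * (1 + γ) - α * h i)⁻¹) * r3
    - (α * (1 + γ) * sv i / 4) * mul_inv_cancel₀ h1γ
    - (α * (1 + γ) * sv i / 4 * ((1 - γ) * (1 - γ)⁻¹)) * mul_inv_cancel₀ h3
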